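/- Let G_1, G_2 be the operators of the polynomial–exponential system defined in the context, with a_{21} ≠ 0, and let A_{s,i} ∈ ℝ (s = 1,2; i = 1,2,3,4). Set γ_0 = p_{10}a_{21}² − d_{10}a_{21}, l_1 = η_{10}A_{1,2} + h_{10}A_{2,3}, ρ_{1,1} = h_{10}η_{10}A_{2,4}, ρ_{1,2} = h_{10}g_{20}A_{2,4}, ρ_{2,1} = h_{20}A_{2,3} + g_{20}A_{2,2}, ρ_{2,2} = 2h_{20}g_{20}A_{2,4}. Then the functions u_1(x_1,x_2,t) = A_{1,1} + l_1 t + (ρ_{1,1}+ρ_{1,2})t²/2 + (A_{1,2} + h_{10}A_{2,4}t)x_1 + [(A_{1,3} + η_{10}A_{1,4}t)e^{γ_0 t} + (A_{1,4}e^{γ_0 t})x_1]e^{−a_{21}x_2} and u_2(x_1,x_2,t) = A_{2,1} + ρ_{2,1}t + ρ_{2,2}t²/2 + (A_{2,2} + h_{20}A_{2,4}t)x_1 + (A_{2,3} + g_{20}A_{2,4}t + A_{2,4}x_1)x_2 satisfy, for all (x_1,x_2,t) ∈ ℝ³ and s = 1,2, ∂u_s/∂t(x_1,x_2,t) = G_s(u_1(·,·,t),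 u_2(·,·,t))(x_1,x_2). -/
import Mathlib
set_option maxHeartbeats 4000000


/-- Partial derivative in the first variable of a function `ℝ → ℝ → ℝ`. -/
noncomputable def pd1 (u : ℝ → ℝ → ℝ) : ℝ → ℝ → ℝ := fun x1 x2 => deriv (fun y => u y x2) x1

/-- Partial derivative in the second variable of a function `ℝ → ℝ → ℝ`. -/
noncomputable def pd2 (u : ℝ → ℝ → ℝ) : ℝ → ℝ → ℝ := fun x1 x2 => deriv (fun y => u x1 y) x2

/-- The first operator `G₁` of the polynomial–exponential system (Example 3.2). -/
noncomputable def Gop1 (k10 q10 q11 p10 c10 d12 d10 e10 h10 a21 : ℝ)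
    (u1 u2 : ℝ → ℝ → ℝ) : ℝ → ℝ → ℝ :=
  fun x1 x2 =>
    pd1 (fun a b => (k10 - q11 * u2 a b) * pd1 u1 a b + (q11 * u1 a b + q10) * pd1 u2 a b) x1 x2 +
    pd2 (fun a b => ((d12 / a21) * u2 a b + p10) * pd2 u1 a b +
      (c10 - (d12 / a21) * u1 a b) * pd2 u2 a b) x1 x2 +
    e10 * pd1 u1 x1 x2 + (d12 * u2 x1 x2 + d10) * pd2 u1 x1 x2 + h10 * pd2 u2 x1 x2

/-- The second operator `G₂` of the polynomial–exponential system (Example 3.2). -/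
noncomputable def Gop2 (k20 q20 q21 c20 g20 h20 : ℝ) (u1 u2 : ℝ → ℝ → ℝ) : ℝ → ℝ → ℝ :=
  fun x1 x2 =>
    pd1 (fun a b => (k20 - q21 * u2 a b) * pd1 u1 a b + (q21 * u1 a b + q20) * pd1 u2 a b) x1 x2 +
    c20 * pd2 (pd2 u2) x1 x2 + g20 * pd1 u2 x1 x2 + h20 * pd2 u2 x1 x2

lemma deriv_cmul (d x : ℝ) : deriv (HMul.hMul d) x = d := by
  simpa using ((hasDerivAt_id x).const_mul d).deriv

/-- The analytical solution of Example 3.2 for the integer orders α₁ = α₂ = 1. -/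
theorem stmt_11 (k10 q10 q11 p10 c10 d12 d10 e10 h10 a21 : ℝ)
    (k20 q20 q21 c20 g20 h20 : ℝ) (ha21 : a21 ≠ 0)
    (A : Fin 2 → Fin 4 → ℝ)
    (γ0 l1 ρ11 ρ12 ρ21 ρ22 : ℝ)
    (hγ0 : γ0 = p10 * a21 ^ 2 - d10 * a21)
    (hl1 : l1 = e10 * A 0 1 + h10 * A 1 2)
    (hρ11 : ρ11 = h10 * e10 * A 1 3)
    (hρ12 : ρ12 = h10 * g20 * A 1 3)
    (hρ21 : ρ21 = h20 * A 1 2 + g20 * A 1 1)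
    (hρ22 : ρ22 = 2 * h20 * g20 * A 1 3)
    (u1 u2 : ℝ → ℝ → ℝ → ℝ)
    (hu1 : ∀ x1 x2 t, u1 x1 x2 t =
      A 0 0 + l1 * t + (ρ11 + ρ12) * t ^ 2 / 2 + (A 0 1 + h10 * A 1 3 * t) * x1 +
      ((A 0 2 + e10 * A 0 3 * t) * Real.exp (γ0 * t) +
        (A 0 3 * Real.exp (γ0 * t)) * x1) * Real.exp (-a21 * x2))
    (hu2 : ∀ x1 x2 t, u2 x1 x2 t =
      A 1 0 + ρ21 * t + ρ22 * t ^ 2 / 2 + (A 1 1 + h20 * A 1 3 * t) * x1 +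
      (A 1 2 + g20 * A 1 3 * t + A 1 3 * x1) * x2) :
    ∀ (x1 x2 t : ℝ),
      deriv (fun τ => u1 x1 x2 τ) t =
        Gop1 k10 q10 q11 p10 c10 d12 d10 e10 h10 a21
          (fun a b => u1 a b t) (fun a b => u2 a b t) x1 x2 ∧
      deriv (fun τ => u2 x1 x2 τ) t =
        Gop2 k20 q20 q21 c20 g20 h20
          (fun a b => u1 a b t) (fun a b => u2 a b t) x1 x2 := by
  intro x1 x2 t
  subst hγ0 hl1 hρ11 hρ12 hρ21 hρ22
  constructor
  · simp only [Gop1, pd1, pd2, hu1, hu2]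
    simp (disch := fun_prop) [Real.deriv_exp, deriv_add, deriv_sub, deriv_mul, deriv_cmul,
      deriv_div_const, deriv_pow]
    field_simp
    ring
  · simp only [Gop2, pd1, pd2, hu1, hu2]
    simp (disch := fun_prop) [Real.deriv_exp, deriv_add, deriv_sub, deriv_mul, deriv_cmul,
      deriv_div_const, deriv_pow]
    field_simp
    ring
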